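/- If A is a completely positive tensor of order m+2 (m even) and dimension n such that the sub-tensor A_{11} obtained by fixing the first two indices to 1 is positive definite, then A is strongly completely positive. -/

import Mathlib

/-- If A is a completely positive tensor of order m+2 (m even) and
dimension n such that the sub-tensor A₁₁ obtained by fixing the first two indices
to 1 is positive definite, then A is strongly completely positive. -/
theorem cp_subtensor_posdef_imp_scp (m n : ℕ) (hm : Even m) (hm0 : m ≠ 0) (hn : 0 < n)
    (A : (Fin (m + 2) → Fin n) → ℝ)
    (hcp : ∃ (r : ℕ) (u : Fin r → Fin n → ℝ),
      (∀ k i, 0 ≤ u k i) ∧ ∀ idx, A idx = ∑ k, ∏ j, u k (idx j))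
    (hpd : ∀ x : Fin n → ℝ, x ≠ 0 →
      0 < ∑ idx : Fin m → Fin n,
        A (Fin.cons ⟨0, hn⟩ (Fin.cons ⟨0, hn⟩ idx)) * ∏ j, x (idx j)) :
    ∃ (r : ℕ) (u : Fin r → Fin n → ℝ),
      (∀ k i, 0 ≤ u k i) ∧ (∀ idx, A idx = ∑ k, ∏ j, u k (idx j)) ∧
      Submodule.span ℝ (Set.range u) = ⊤ := by
  obtain ⟨r, u, hu, hA⟩ := hcp
  refine ⟨r, u, hu, hA, ?_⟩
  by_contra h
  -- work in EuclideanSpace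
  set u' : Fin r → EuclideanSpace ℝ (Fin n) := fun k => WithLp.toLp 2 (u k) with hu'
  set p : Submodule ℝ (EuclideanSpace ℝ (Fin n)) := Submodule.span ℝ (Set.range u') with hp
  have hpne : p ≠ ⊤ := by
    intro hp'; apply h
    have := congrArg (Submodule.map (WithLp.linearEquiv 2 ℝ (Fin n → ℝ)).toLinearMap) hp'
    rw [Submodule.map_span, ← Set.range_comp, Submodule.map_top, LinearEquiv.range] at this
    exact this
  have horth : pᗮ ≠ ⊥ := by
    rw [Ne, Submodule.orthogonal_eq_bot_iff]; exact hpne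
  obtain ⟨x, hxmem, hxne⟩ := Submodule.exists_mem_ne_zero_of_ne_bot horth
  have hinner : ∀ k, ∑ i, u k i * x i = 0 := by
    intro k
    have := (Submodule.mem_orthogonal p x).mp hxmem (u' k)
      (Submodule.subset_span (Set.mem_range_self k))
    simpa [hu', PiLp.inner_apply, RCLike.inner_apply, mul_comm] using this
  have hx0 : (x : Fin n → ℝ) ≠ 0 := fun h0 => hxne (by ext i; simpa using congrFun h0 i)
  have key : ∑ idx : Fin m → Fin n,
      A (Fin.cons ⟨0, hn⟩ (Fin.cons ⟨0, hn⟩ idx)) * ∏ j, (x : Fin n → ℝ) (idx j) = 0 := by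
    have step : ∀ idx : Fin m → Fin n,
        A (Fin.cons ⟨0, hn⟩ (Fin.cons ⟨0, hn⟩ idx)) * ∏ j, (x : Fin n → ℝ) (idx j)
        = ∑ k, u k ⟨0, hn⟩ * u k ⟨0, hn⟩ * ∏ j, (u k (idx j) * x (idx j)) := by
      intro idx
      rw [hA, Finset.sum_mul]
      refine Finset.sum_congr rfl fun k _ => ?_
      rw [Fin.prod_univ_succ, Fin.prod_univ_succ]
      have e0 : (Fin.cons ⟨0, hn⟩ (Fin.cons ⟨0, hn⟩ idx) : Fin (m+2) → Fin n) 0 = ⟨0, hn⟩ := rfl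
      have e1 : (Fin.cons ⟨0, hn⟩ (Fin.cons ⟨0, hn⟩ idx) : Fin (m+2) → Fin n) (Fin.succ 0) = ⟨0, hn⟩ := rfl
      have e2 : ∀ i : Fin m, (Fin.cons ⟨0, hn⟩ (Fin.cons ⟨0, hn⟩ idx) : Fin (m+2) → Fin n) i.succ.succ = idx i := fun i => rfl
      have e3 : ∏ i : Fin m, u' k ((Fin.cons ⟨0, hn⟩ (Fin.cons ⟨0, hn⟩ idx) : Fin (m+2) → Fin n) i.succ.succ) = ∏ i : Fin m, u k (idx i) :=
        Finset.prod_congr rfl fun i _ => congrArg (u k) (e2 i)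
      rw [e0, e1, e3, Finset.prod_mul_distrib]
      ring
    rw [Finset.sum_congr rfl fun idx _ => step idx, Finset.sum_comm]
    refine Finset.sum_eq_zero fun k _ => ?_
    rw [← Finset.mul_sum]
    have : ∑ idx : Fin m → Fin n, ∏ j, (u k (idx j) * x (idx j))
        = (∑ i, u k i * x i) ^ m := by
      rw [Finset.sum_pow']
      rw [← Fintype.piFinset_univ]
    rw [this, hinner k, zero_pow hm0, mul_zero]
  have := hpd _ hx0
  rw [key] at this
  exact lt_irrefl 0 this
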